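/- (Pre-image of a small ball under scattering.) Fix v̄_i, v_j ∈ ℝ² with all velocities bounded by R > 1 and δ ∈ (0,1). For (v*, ν*) ∈ B_R × 𝕊¹ let v_i := v* - ((v* - v̄_i)·ν*) ν* (post-collisional velocity). Then ∫_{𝕊¹}∫_{B_R} 1_{|v_i - v_j| ≤ δ} |(v* - v̄_i)·ν*| dv* dν* ≤ C R² δ min(δ/|v_j - v̄_i|, 1) for a universal constant C. -/

import Mathlib

open MeasureTheory Metric
open scoped RealInnerProductSpace ENNReal Pointwise

noncomputable section

/-- The plane `ℝ²`. -/
abbrev E2 : Type := EuclideanSpace ℝ (Fin 2)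

/-- The surface measure on the unit circle `𝕊¹ ⊂ ℝ²`. -/
def sphμ : Measure (sphere (0 : E2) 1) := (volume : Measure E2).toSphere

/-- The post-collisional velocity `v_i = v* - ((v* - v̄_i)·ν*) ν*`. -/
def scat (vbar v : E2) (ν : E2) : E2 := v - ⟪v - vbar, ν⟫ • ν

namespace Stmt9

open Set

def perp (u : E2) : E2 := !₂[-(u 1), u 0]

def e1 : E2 := !₂[1, 0]

lemma inner_perp_self (u : E2) : ⟪u, perp u⟫ = 0 := by
  simp [PiLp.inner_apply, Fin.sum_univ_two, RCLike.inner_apply, perp]; ring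

lemma norm_sq_E2 (u : E2) : ⟪u, u⟫ = u 0 ^ 2 + u 1 ^ 2 := by
  rw [PiLp.inner_apply, Fin.sum_univ_two]; simp only [RCLike.inner_apply, conj_trivial]; ring

lemma norm_of_inner_one (u : E2) (h : ⟪u, u⟫ = 1) : ‖u‖ = 1 := by
  have := real_inner_self_eq_norm_sq u
  nlinarith [norm_nonneg u]

lemma unit_sq (u : E2) (hu : ‖u‖ = 1) : u 0 ^ 2 + u 1 ^ 2 = 1 := by
  rw [← norm_sq_E2, real_inner_self_eq_norm_sq, hu]; norm_num

lemma norm_perp (u : E2) (hu : ‖u‖ = 1) : ‖perp u‖ = 1 := by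
  have h1 := unit_sq u hu
  refine norm_of_inner_one _ ?_
  rw [norm_sq_E2]; simp only [perp, PiLp.toLp_apply, Matrix.cons_val_zero, Matrix.cons_val_one]; linarith

lemma onb_orth (u : E2) (hu : ‖u‖ = 1) : Orthonormal ℝ ![u, perp u] := by
  have h1 := unit_sq u hu
  rw [orthonormal_iff_ite]
  intro i j
  have h2 : ‖(!₂[-(u 1), u 0] : E2)‖ = 1 := norm_perp u hu
  fin_cases i <;> fin_cases j <;>
    · simp [PiLp.inner_apply, Fin.sum_univ_two, RCLike.inner_apply, perp, hu, h2]
      try ring_nf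
      try linarith

/-- orthonormal basis from a unit vector and its perp -/
def onb (u : E2) (hu : ‖u‖ = 1) : OrthonormalBasis (Fin 2) ℝ E2 :=
  OrthonormalBasis.mk (onb_orth u hu)
    ((onb_orth u hu).linearIndependent.span_eq_top_of_card_eq_finrank (by simp)).ge

lemma onb_zero (u : E2) (hu : ‖u‖ = 1) : onb u hu 0 = u := by
  simp [onb, OrthonormalBasis.coe_mk]

lemma onb_one (u : E2) (hu : ‖u‖ = 1) : onb u hu 1 = perp u := by
  simp [onb, OrthonormalBasis.coe_mk]

lemma slab_vol (u : E2) (hu : ‖u‖ = 1) (a₁ b₁ a₂ b₂ : ℝ) :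
    volume {x : E2 | ⟪u, x⟫ ∈ Icc a₁ b₁ ∧ ⟪perp u, x⟫ ∈ Icc a₂ b₂}
      = ENNReal.ofReal (b₁ - a₁) * ENNReal.ofReal (b₂ - a₂) := by
  set b := onb u hu with hb
  set f : E2 → (Fin 2 → ℝ) := (MeasurableEquiv.toLp 2 (Fin 2 → ℝ)).symm ∘ b.repr with hf
  have hmp : MeasurePreserving f volume volume :=
    (EuclideanSpace.volume_preserving_symm_measurableEquiv_toLp (Fin 2)).comp b.measurePreserving_repr
  set I : Fin 2 → Set ℝ := ![Icc a₁ b₁, Icc a₂ b₂] with hI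
  have hset : {x : E2 | ⟪u, x⟫ ∈ Icc a₁ b₁ ∧ ⟪perp u, x⟫ ∈ Icc a₂ b₂}
      = f ⁻¹' (univ.pi I) := by
    ext x
    have e0 : f x 0 = ⟪u, x⟫ := by
      show b.repr x 0 = _; rw [b.repr_apply_apply, onb_zero]
    have e1 : f x 1 = ⟪perp u, x⟫ := by
      show b.repr x 1 = _; rw [b.repr_apply_apply, onb_one]
    simp only [mem_setOf_eq, mem_preimage, Set.mem_univ_pi, Fin.forall_fin_two, e0, e1]
    simp [hI]
  have hms : MeasurableSet (univ.pi I) :=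
    MeasurableSet.univ_pi (by intro i; fin_cases i <;> exact measurableSet_Icc)
  rw [hset, hmp.measure_preimage hms.nullMeasurableSet, volume_pi_pi]
  simp [hI, Fin.prod_univ_two, Real.volume_Icc]

lemma inner_scat (vbar v ν z : E2) (hν : ‖ν‖ = 1) :
    ⟪scat vbar v ν - z, ν⟫ = ⟪vbar - z, ν⟫ := by
  have h : ⟪ν, ν⟫ = (1 : ℝ) := by rw [real_inner_self_eq_norm_sq, hν]; norm_num
  simp only [scat, inner_sub_left, real_inner_smul_left, h]
  ring

lemma inner_scat_perp (vbar v ν z : E2) :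
    ⟪scat vbar v ν - z, perp ν⟫ = ⟪v - z, perp ν⟫ := by
  simp only [scat, inner_sub_left, real_inner_smul_left, inner_perp_self, mul_zero]
  ring

end Stmt9

open Stmt9 Set

/-- Pre-image of a small ball under scattering: for all velocities bounded
by `R > 1` and `δ ∈ (0,1)`,
`∫_{𝕊¹} ∫_{B_R} 1_{|v_i - v_j| ≤ δ} |(v* - v̄_i)·ν*| dv* dν* ≤ C R² δ min(δ/|v_j - v̄_i|, 1)`
(the factor `min(δ/|v_j-v̄_i|, 1)` being written as `δ / max(|v_j-v̄_i|, δ)`). -/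
theorem statement9 :
    ∃ C : ℝ, 0 < C ∧
      ∀ (R δ : ℝ) (vbar vj : E2), 1 < R → 0 < δ → δ < 1 → ‖vbar‖ ≤ R → ‖vj‖ ≤ R →
        (∫ ν : sphere (0 : E2) 1, ∫ v in Metric.ball (0 : E2) R,
            Set.indicator {v : E2 | ‖scat vbar v (ν : E2) - vj‖ ≤ δ}
              (fun v => |⟪v - vbar, (ν : E2)⟫|) v ∂volume ∂sphμ)
          ≤ C * R ^ 2 * δ * (δ / max ‖vj - vbar‖ δ) := by
  refine ⟨64, by norm_num, ?_⟩
  intro R δ vbar vj hR hδ hδ1 hvbar hvj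
  have hR0 : (0:ℝ) < R := lt_trans one_pos hR
  set w : E2 := vj - vbar with hw
  haveI : IsFiniteMeasure sphμ := by unfold sphμ; infer_instance
  set A : Set (sphere (0 : E2) 1) := {ν | |⟪w, (ν : E2)⟫| ≤ δ} with hA
  have hAm : MeasurableSet A := by
    have hc : Continuous fun ν : sphere (0 : E2) 1 => |⟪w, (ν : E2)⟫| :=
      (continuous_const.inner continuous_subtype_val).abs
    exact (isClosed_le hc continuous_const).measurableSet
  -- pointwise bound on the inner integral
  have key : ∀ ν : sphere (0 : E2) 1,
      (∫ v in Metric.ball (0 : E2) R,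
          Set.indicator {v : E2 | ‖scat vbar v (ν : E2) - vj‖ ≤ δ}
            (fun v => |⟪v - vbar, (ν : E2)⟫|) v ∂volume)
        ≤ A.indicator (fun _ => 8 * R ^ 2 * δ) ν := by
    intro ν
    have hν : ‖(ν : E2)‖ = 1 := mem_sphere_zero_iff_norm.mp ν.2
    set S : Set E2 := {v | ‖scat vbar v (ν : E2) - vj‖ ≤ δ} with hS
    by_cases hmem : ν ∈ A
    · rw [Set.indicator_of_mem hmem]
      set c : ℝ := ⟪perp (ν : E2), vj⟫ with hc
      set T : Set E2 := {v | ⟪(ν : E2), v⟫ ∈ Icc (-R) R ∧ ⟪perp (ν : E2), v⟫ ∈ Icc (c - δ) (c + δ)}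
        with hT
      have hTvol : volume T = ENNReal.ofReal (2 * R) * ENNReal.ofReal (2 * δ) := by
        rw [hT, slab_vol _ hν]
        congr 1 <;> [skip; skip] <;> congr 1 <;> ring
      have hTm : MeasurableSet T := by
        refine MeasurableSet.inter ?_ ?_
        · exact (isClosed_Icc.preimage (continuous_const.inner continuous_id)).measurableSet
        · exact (isClosed_Icc.preimage (continuous_const.inner continuous_id)).measurableSet
      have hbound : ∀ v ∈ Metric.ball (0 : E2) R,
          S.indicator (fun v => |⟪v - vbar, (ν : E2)⟫|) v
            ≤ T.indicator (fun _ => 2 * R) v := by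
        intro v hv
        have hvnorm : ‖v‖ < R := by simpa using mem_ball_zero_iff.mp hv
        by_cases hvS : v ∈ S
        · have hscat : ‖scat vbar v (ν : E2) - vj‖ ≤ δ := hvS
          have hvT : v ∈ T := by
            constructor
            · rw [mem_Icc, ← abs_le]
              calc |⟪(ν : E2), v⟫| ≤ ‖(ν : E2)‖ * ‖v‖ := abs_real_inner_le_norm _ _
                _ ≤ R := by rw [hν, one_mul]; exact hvnorm.le
            · have h1 : ⟪scat vbar v (ν : E2) - vj, perp (ν : E2)⟫
                  = ⟪perp (ν : E2), v⟫ - c := by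
                rw [inner_scat_perp,
                  show ⟪v - vj, perp (ν : E2)⟫ = ⟪perp (ν : E2), v - vj⟫ from real_inner_comm _ _,
                  inner_sub_right, hc]
              have h2 : |⟪perp (ν : E2), v⟫ - c| ≤ δ := by
                rw [← h1]
                calc |⟪scat vbar v (ν : E2) - vj, perp (ν : E2)⟫|
                    ≤ ‖scat vbar v (ν : E2) - vj‖ * ‖perp (ν : E2)‖ := abs_real_inner_le_norm _ _
                  _ ≤ δ := by rw [norm_perp _ hν, mul_one]; exact hscat
              have h3 := abs_le.mp h2
              rw [mem_Icc]
              constructor <;> linarith [h3.1, h3.2]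
          rw [Set.indicator_of_mem hvS, Set.indicator_of_mem hvT]
          calc |⟪v - vbar, (ν : E2)⟫| ≤ ‖v - vbar‖ * ‖(ν : E2)‖ := abs_real_inner_le_norm _ _
            _ ≤ 2 * R := by
                rw [hν, mul_one]
                calc ‖v - vbar‖ ≤ ‖v‖ + ‖vbar‖ := norm_sub_le _ _
                  _ ≤ 2 * R := by linarith
        · rw [Set.indicator_of_notMem hvS]
          exact Set.indicator_nonneg (fun _ _ => by positivity) v
      calc (∫ v in Metric.ball (0 : E2) R,
              S.indicator (fun v => |⟪v - vbar, (ν : E2)⟫|) v ∂volume)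
          ≤ ∫ v in Metric.ball (0 : E2) R, T.indicator (fun _ => 2 * R) v ∂volume := by
            refine integral_mono_of_nonneg ?_ ?_ ?_
            · exact Filter.Eventually.of_forall fun v =>
                Set.indicator_nonneg (fun _ _ => abs_nonneg _) v
            · exact ((integrableOn_const measure_ball_lt_top.ne)).indicator hTm
            · exact (ae_restrict_iff' measurableSet_ball).mpr (Filter.Eventually.of_forall hbound)
        _ = (volume (Metric.ball (0 : E2) R ∩ T)).toReal • (2 * R) := by
            rw [setIntegral_indicator hTm, setIntegral_const, measureReal_def]
        _ ≤ 8 * R ^ 2 * δ := by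
            rw [smul_eq_mul]
            have hle : (volume (Metric.ball (0 : E2) R ∩ T)).toReal ≤ 4 * R * δ := by
              have h1 : volume (Metric.ball (0 : E2) R ∩ T) ≤ ENNReal.ofReal (4 * R * δ) := by
                refine le_trans (measure_mono inter_subset_right) ?_
                rw [hTvol, ← ENNReal.ofReal_mul (by positivity)]
                exact ENNReal.ofReal_le_ofReal (by nlinarith)
              exact (ENNReal.toReal_le_of_le_ofReal (by positivity) h1)
            nlinarith [ENNReal.toReal_nonneg (a := volume (Metric.ball (0 : E2) R ∩ T))]
    · rw [Set.indicator_of_notMem hmem]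
      have hempty : ∀ v, v ∉ S := by
        intro v hvS
        apply hmem
        have h1 : ⟪w, (ν : E2)⟫ = -⟪scat vbar v (ν : E2) - vj, (ν : E2)⟫ := by
          rw [inner_scat vbar v _ vj hν, hw, ← inner_neg_left, neg_sub]
        show |⟪w, (ν : E2)⟫| ≤ δ
        rw [h1, abs_neg]
        calc |⟪scat vbar v (ν : E2) - vj, (ν : E2)⟫|
            ≤ ‖scat vbar v (ν : E2) - vj‖ * ‖(ν : E2)‖ := abs_real_inner_le_norm _ _
          _ ≤ δ := by rw [hν, mul_one]; exact hvS
      have hzero : S.indicator (fun v => |⟪v - vbar, (ν : E2)⟫|) = fun _ => (0:ℝ) := by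
        funext v
        exact Set.indicator_of_notMem (hempty v) _
      rw [hzero]
      simp
  -- sphere measure bound
  have hsph : (sphμ A).toReal ≤ 8 * (δ / max ‖w‖ δ) := by
    have happ : sphμ A = 2 * volume (Ioo (0:ℝ) 1 • (Subtype.val '' A)) := by
      have := Measure.toSphere_apply' (volume : Measure E2) hAm
      simpa [sphμ, finrank_euclideanSpace_fin] using this
    have hofmul : ∀ a b : ℝ, 0 ≤ a → 0 ≤ b →
        (2:ℝ≥0∞) * (ENNReal.ofReal a * ENNReal.ofReal b) = ENNReal.ofReal (2 * a * b) := by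
      intro a b ha hb
      rw [mul_assoc, ENNReal.ofReal_mul (by norm_num : (0:ℝ) ≤ 2),
        ENNReal.ofReal_mul ha]
      norm_num
    rcases le_or_gt ‖w‖ δ with hcase | hcase
    · rw [max_eq_right hcase, div_self hδ.ne', mul_one]
      have he : ‖e1‖ = 1 := by
        refine norm_of_inner_one _ ?_
        rw [norm_sq_E2]
        norm_num [e1, Matrix.cons_val_zero, Matrix.cons_val_one, Matrix.head_cons]
      have hball : Metric.ball (0:E2) 1 ⊆
          {x : E2 | ⟪e1, x⟫ ∈ Icc (-1:ℝ) 1 ∧ ⟪perp e1, x⟫ ∈ Icc (-1:ℝ) 1} := by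
        intro x hx
        have hxn : ‖x‖ ≤ 1 := (mem_ball_zero_iff.mp hx).le
        constructor
        · rw [mem_Icc, ← abs_le]
          calc |⟪e1, x⟫| ≤ ‖e1‖ * ‖x‖ := abs_real_inner_le_norm _ _
            _ ≤ 1 := by rw [he, one_mul]; exact hxn
        · rw [mem_Icc, ← abs_le]
          calc |⟪perp e1, x⟫| ≤ ‖perp e1‖ * ‖x‖ := abs_real_inner_le_norm _ _
            _ ≤ 1 := by rw [norm_perp _ he, one_mul]; exact hxn
      have h2 : sphμ A ≤ ENNReal.ofReal 8 := by
        calc sphμ A ≤ sphμ univ := measure_mono (subset_univ _)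
          _ = 2 * volume (Metric.ball (0:E2) 1) := by
              have := Measure.toSphere_apply_univ (volume : Measure E2)
              simp only [sphμ, finrank_euclideanSpace_fin] at this ⊢
              rw [this]; norm_num
          _ ≤ 2 * (ENNReal.ofReal (1 - (-1)) * ENNReal.ofReal (1 - (-1))) := by
              refine mul_le_mul_right ?_ 2
              exact le_trans (measure_mono hball) (le_of_eq (slab_vol _ he (-1) 1 (-1) 1))
          _ = ENNReal.ofReal 8 := by rw [hofmul _ _ (by norm_num) (by norm_num)]; norm_num
      exact ENNReal.toReal_le_of_le_ofReal (by norm_num) h2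
    · rw [max_eq_left hcase.le]
      have hwpos : (0:ℝ) < ‖w‖ := lt_trans hδ hcase
      have hw0 : w ≠ 0 := by
        intro h; rw [h, norm_zero] at hwpos; exact lt_irrefl _ hwpos
      set u : E2 := ‖w‖⁻¹ • w with hu'
      have hu : ‖u‖ = 1 := norm_smul_inv_norm hw0
      have hsub : Ioo (0:ℝ) 1 • (Subtype.val '' A) ⊆
          {x : E2 | ⟪u, x⟫ ∈ Icc (-(δ/‖w‖)) (δ/‖w‖) ∧ ⟪perp u, x⟫ ∈ Icc (-1:ℝ) 1} := by
        intro x hx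
        rw [Set.mem_smul] at hx
        obtain ⟨r, hr, y, hy, rfl⟩ := hx
        obtain ⟨ν, hνA, rfl⟩ := hy
        have hν1 : ‖(ν : E2)‖ = 1 := mem_sphere_zero_iff_norm.mp ν.2
        have hνA' : |⟪w, (ν:E2)⟫| ≤ δ := hνA
        have hr0 : (0:ℝ) < r := hr.1
        have hr1 : r < 1 := hr.2
        constructor
        · rw [mem_Icc, ← abs_le]
          have heq : ⟪u, r • (ν:E2)⟫ = r * (‖w‖⁻¹ * ⟪w, (ν:E2)⟫) := by
            rw [real_inner_smul_right, hu', real_inner_smul_left]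
          rw [heq, abs_mul, abs_mul, abs_of_pos hr0, abs_of_pos (inv_pos.mpr hwpos)]
          have h1 : ‖w‖⁻¹ * |⟪w, (ν:E2)⟫| ≤ ‖w‖⁻¹ * δ :=
            mul_le_mul_of_nonneg_left hνA' (by positivity)
          calc r * (‖w‖⁻¹ * |⟪w, (ν:E2)⟫|) ≤ 1 * (‖w‖⁻¹ * δ) :=
              mul_le_mul hr1.le h1 (by positivity) (by norm_num)
            _ = δ / ‖w‖ := by rw [one_mul, inv_mul_eq_div]
        · rw [mem_Icc, ← abs_le]
          calc |⟪perp u, r • (ν:E2)⟫| ≤ ‖perp u‖ * ‖r • (ν:E2)‖ := abs_real_inner_le_norm _ _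
            _ = r := by
                rw [norm_perp _ hu, one_mul, norm_smul, hν1, mul_one,
                  Real.norm_eq_abs, abs_of_pos hr0]
            _ ≤ 1 := hr1.le
      have h2 : sphμ A ≤ ENNReal.ofReal (8 * (δ / ‖w‖)) := by
        calc sphμ A = 2 * volume (Ioo (0:ℝ) 1 • (Subtype.val '' A)) := happ
          _ ≤ 2 * (ENNReal.ofReal (δ/‖w‖ - -(δ/‖w‖)) * ENNReal.ofReal (1 - (-1))) := by
              refine mul_le_mul_right ?_ 2
              exact le_trans (measure_mono hsub)
                (le_of_eq (slab_vol u hu (-(δ/‖w‖)) (δ/‖w‖) (-1) 1))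
          _ = ENNReal.ofReal (8 * (δ / ‖w‖)) := by
              have hpos := div_pos hδ hwpos
              rw [hofmul _ _ (by linarith) (by norm_num)]
              congr 1; ring
      exact ENNReal.toReal_le_of_le_ofReal (by positivity) h2
  -- assemble
  calc (∫ ν : sphere (0 : E2) 1, ∫ v in Metric.ball (0 : E2) R,
          Set.indicator {v : E2 | ‖scat vbar v (ν : E2) - vj‖ ≤ δ}
            (fun v => |⟪v - vbar, (ν : E2)⟫|) v ∂volume ∂sphμ)
      ≤ ∫ ν, A.indicator (fun _ => 8 * R ^ 2 * δ) ν ∂sphμ := by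
        refine integral_mono_of_nonneg ?_ ?_ (Filter.Eventually.of_forall key)
        · exact Filter.Eventually.of_forall fun ν =>
            integral_nonneg fun v => Set.indicator_nonneg (fun _ _ => abs_nonneg _) v
        · exact (integrable_const _).indicator hAm
    _ = (sphμ A).toReal * (8 * R ^ 2 * δ) := by
        rw [integral_indicator_const _ hAm, smul_eq_mul, measureReal_def]
    _ ≤ (8 * (δ / max ‖w‖ δ)) * (8 * R ^ 2 * δ) := by
        refine mul_le_mul_of_nonneg_right hsph (by positivity)
    _ = 64 * R ^ 2 * δ * (δ / max ‖vj - vbar‖ δ) := by rw [hw]; ring
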